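/- Suppose z = (z₁,…,z_{n+1}) ∈ ℂ^{n+1} with n ≥ 3 satisfies Im(z Â B̂ z̄ᵗ) = 0 for all matrices A, B in the Lie algebra so(n) (where Â denotes the (n+1)×(n+1) matrix with A in the top-left n×n block and zeros elsewhere). Then the vectors Re(z₁,…,zₙ) and Im(z₁,…,zₙ) in ℝⁿ are linearly dependent. -/

import Mathlib

open Matrix

set_option maxHeartbeats 1000000 in
theorem stmt14 (n : ℕ) (hn : 3 ≤ n) (z : Fin (n + 1) → ℂ)
    (h : ∀ A B : Matrix (Fin n) (Fin n) ℝ, Aᵀ = -A → Bᵀ = -B →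
      (∑ i, ∑ j, ∑ k, z (Fin.castSucc i) * (A i j : ℂ) * (B j k : ℂ) *
        (starRingEnd ℂ) (z (Fin.castSucc k))).im = 0) :
    ∃ c d : ℝ, (c ≠ 0 ∨ d ≠ 0) ∧
      ∀ i : Fin n, c * (z (Fin.castSucc i)).re + d * (z (Fin.castSucc i)).im = 0 := by
  have key : ∀ i k : Fin n,
      (z (Fin.castSucc i) * (starRingEnd ℂ) (z (Fin.castSucc k))).im = 0 := by
    intro i k
    rcases eq_or_ne i k with rfl | hik
    · simp [Complex.mul_conj]
    · have hcard : (({i, k} : Finset (Fin n))ᶜ).Nonempty := by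
        rw [← Finset.card_pos, Finset.card_compl]
        have h2 : ({i, k} : Finset (Fin n)).card ≤ 2 := by
          apply le_trans (Finset.card_insert_le _ _); simp
        simp only [Fintype.card_fin]
        omega
      obtain ⟨j, hj⟩ := hcard
      simp only [Finset.mem_compl, Finset.mem_insert, Finset.mem_singleton, not_or] at hj
      obtain ⟨hji, hjk⟩ := hj
      set A : Matrix (Fin n) (Fin n) ℝ :=
        fun a b => if a = i ∧ b = j then 1 else if a = j ∧ b = i then -1 else 0 with hA
      set B : Matrix (Fin n) (Fin n) ℝ :=
        fun a b => if a = j ∧ b = k then 1 else if a = k ∧ b = j then -1 else 0 with hB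
      have hAanti : Aᵀ = -A := by
        clear h
        ext a b
        simp only [transpose_apply, Matrix.neg_apply]; simp only [hA]
        split_ifs <;> simp_all
      have hBanti : Bᵀ = -B := by
        clear h
        ext a b
        simp only [transpose_apply, Matrix.neg_apply]; simp only [hB]
        split_ifs <;> simp_all
      have hsum := h A B hAanti hBanti
      have hterm : ∀ a b c : Fin n,
          z (Fin.castSucc a) * (A a b : ℂ) * (B b c : ℂ) *
              (starRingEnd ℂ) (z (Fin.castSucc c)) =
            if a = i then (if b = j then (if c = k then
              z (Fin.castSucc i) * (starRingEnd ℂ) (z (Fin.castSucc k)) else 0)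
              else 0) else 0 := by
        clear h hsum hAanti hBanti
        intro a b c
        simp only [hA, hB]
        split_ifs <;> simp_all
      have hsum2 : (∑ a, ∑ b, ∑ c, z (Fin.castSucc a) * (A a b : ℂ) * (B b c : ℂ) *
            (starRingEnd ℂ) (z (Fin.castSucc c))) =
          z (Fin.castSucc i) * (starRingEnd ℂ) (z (Fin.castSucc k)) := by
        clear h hsum hAanti hBanti
        calc (∑ a, ∑ b, ∑ c, z (Fin.castSucc a) * (A a b : ℂ) * (B b c : ℂ) *
            (starRingEnd ℂ) (z (Fin.castSucc c)))
            = ∑ a, ∑ b, ∑ c, (if a = i then (if b = j then (if c = k then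
              z (Fin.castSucc i) * (starRingEnd ℂ) (z (Fin.castSucc k)) else 0)
              else 0) else 0) :=
              Finset.sum_congr rfl fun a _ => Finset.sum_congr rfl fun b _ =>
                Finset.sum_congr rfl fun c _ => hterm a b c
          _ = z (Fin.castSucc i) * (starRingEnd ℂ) (z (Fin.castSucc k)) := by simp
      rw [hsum2] at hsum
      exact hsum
  have hM : ∀ i k : Fin n,
      (z (Fin.castSucc i)).im * (z (Fin.castSucc k)).re -
        (z (Fin.castSucc i)).re * (z (Fin.castSucc k)).im = 0 := by
    intro i k
    have h0 := key i k
    simp only [Complex.mul_im, Complex.conj_re, Complex.conj_im] at h0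
    linarith
  by_cases hx : ∀ i : Fin n, (z (Fin.castSucc i)).re = 0
  · exact ⟨1, 0, Or.inl one_ne_zero, fun i => by simp [hx i]⟩
  · push_neg at hx
    obtain ⟨i0, hi0⟩ := hx
    refine ⟨(z (Fin.castSucc i0)).im, -(z (Fin.castSucc i0)).re,
      Or.inr (by simpa using hi0), fun i => ?_⟩
    have := hM i0 i
    linarith
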